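/- Let c, t, a1, a2, a3 and a1′, a2′, a3′ be real numbers with D := a1 − 2t·a1′ − 2c·t·a2 − 4c·t²·a2′ ≠ 0, and define b1 = (2c²t·a2² + 2ct·a1·a2′ + a1·a1′ − c + 3c·a3²)/D, b3 = (a1·a3′ + 2c·a2·a3 + 4ct·a2′·a3 − 2ct·a2·a3′)/D. Assume a1·a2 = 1+a3² and a1·a2′ + a1′·a2 = 2·a3·a3′ and a1 + 2t·b1 ≠ 0. Then a1′ = (a1·b1 + c·(1 − 3a3² − 4t·a3·b3))/(a1 + 2t·b1) and a3′ = (a1·b3 − 2c·a2·(a3 + t·b3))/(a1 + 2t·b1). -/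

import Mathlib

theorem stmt_15 (c t a1 a2 a3 a1' a2' a3' : ℝ)
    (D : ℝ) (hD : D = a1 - 2 * t * a1' - 2 * c * t * a2 - 4 * c * t ^ 2 * a2')
    (hD0 : D ≠ 0)
    (b1 b3 : ℝ)
    (hb1 : b1 = (2 * c ^ 2 * t * a2 ^ 2 + 2 * c * t * a1 * a2' + a1 * a1' - c +
      3 * c * a3 ^ 2) / D)
    (hb3 : b3 = (a1 * a3' + 2 * c * a2 * a3 + 4 * c * t * a2' * a3 -
      2 * c * t * a2 * a3') / D)
    (halg : a1 * a2 = 1 + a3 ^ 2)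
    (hdiff : a1 * a2' + a1' * a2 = 2 * a3 * a3')
    (hden : a1 + 2 * t * b1 ≠ 0) :
    a1' = (a1 * b1 + c * (1 - 3 * a3 ^ 2 - 4 * t * a3 * b3)) / (a1 + 2 * t * b1) ∧
    a3' = (a1 * b3 - 2 * c * a2 * (a3 + t * b3)) / (a1 + 2 * t * b1) := by
  subst hb1 hb3 hD
  constructor
  · rw [eq_div_iff hden]
    field_simp [show a1 - a1' * 2 * t - 2 * t * c * a2 - t ^ 2 * c * a2' * 4 ≠ 0 by contrapose! hD0; linarith]
    linear_combination (-2*c^2*t*a2 - 4*c^2*t^2*a2')*halg + (-2*c*t*a1 + 4*c^2*t^2*a2)*hdiff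
  · rw [eq_div_iff hden]
    field_simp [show a1 - 2 * t * a1' - 2 * t * c * a2 - t ^ 2 * c * a2' * 4 ≠ 0 by contrapose! hD0; linarith]
    linear_combination (2*c*t*a3')*halg + (-4*c*t*a3)*hdiff
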